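/- Let ω < 0, 0 < α ≤ 1 and 0 < αγ ≤ β ≤ 1. Let λ₀ ∈ ℂ with λ₀ ≠ 0 and λ₀ not in the closure of Ψ ∪ Ψ̄, where Ψ = {Λ(θ) : θ ∈ (0, απ/2)} and Ψ̄ its complex-conjugate set. Then there exists r > 0 such that for every λ ∈ ℂ with |λ − λ₀| < r, the number of roots s with Re(s) ≥ 0 of the equation F(s) = λ, counted with multiplicity (multiplicity being the order of vanishing of the analytic function s ↦ F(s) − λ at the root), equals the corresponding number for λ₀. In particular, the unstable-root count is constant on each connected component of ℂ \ closure(Ψ ∪ Ψ̄). -/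

import Mathlib

open Real Complex Filter Set Topology

/-- The curve parametrization Λ(θ) bounding the stability region. -/
noncomputable def Lam (α β γ ω : ℝ) (θ : ℝ) : ℂ :=
  ((|ω| ^ (β / α) * Real.sin θ ^ (β / α - γ) * Real.sin (α * π / 2) ^ γ *
      Real.sin (α * π / 2 - θ) ^ (-(β / α)) : ℝ) : ℂ) *
    Complex.exp (Complex.I * ((γ * θ + (β - α * γ) * π / 2 : ℝ) : ℂ))

/-- The characteristic function F(s) = s^(β-αγ) (s^α - ω)^γ (principal branches). -/
noncomputable def Fc (α β γ ω : ℝ) (s : ℂ) : ℂ :=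
  s ^ ((β - α * γ : ℝ) : ℂ) * (s ^ ((α : ℝ) : ℂ) - (ω : ℂ)) ^ ((γ : ℝ) : ℂ)

/-- μ(θ) = (|ω| sin θ / sin(απ/2 - θ))^(1/α). -/
noncomputable def muP (α ω : ℝ) (θ : ℝ) : ℝ :=
  (|ω| * Real.sin θ / Real.sin (α * π / 2 - θ)) ^ (1 / α)

/-- ρ(θ) = |ω| sin(απ/2) / sin(απ/2 - θ). -/
noncomputable def rhoP (α ω : ℝ) (θ : ℝ) : ℝ :=
  |ω| * Real.sin (α * π / 2) / Real.sin (α * π / 2 - θ)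

/-- The curve Ψ = Λ((0, απ/2)). -/
noncomputable def PsiSet (α β γ ω : ℝ) : Set ℂ :=
  Lam α β γ ω '' Set.Ioo 0 (α * π / 2)

/-- The complex conjugate curve Ψ̄. -/
noncomputable def PsiBar (α β γ ω : ℝ) : Set ℂ :=
  {z : ℂ | (starRingEnd ℂ) z ∈ PsiSet α β γ ω}

open scoped Classical in
/-- Multiplicity of a root: the analytic order of vanishing of s ↦ F(s) - λ. -/
noncomputable def multAt (α β γ ω : ℝ) (lam s : ℂ) : ℕ∞ :=
  if h : AnalyticAt ℂ (fun z => Fc α β γ ω z - lam) s then analyticOrderAt (fun z => Fc α β γ ω z - lam) s else 0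

/-- Number of unstable roots (Re s ≥ 0) of F(s) = λ, counted with multiplicity. -/
noncomputable def Ncount (α β γ ω : ℝ) (lam : ℂ) : ℕ∞ :=
  ∑' s : {s : ℂ // 0 ≤ s.re ∧ Fc α β γ ω s = lam}, multAt α β γ ω lam (s : ℂ)


lemma cpow_polar (s : ℂ) (hs : s ≠ 0) (a : ℝ) :
    s ^ (a : ℂ) = ((‖s‖ ^ a : ℝ) : ℂ) *
      Complex.exp (((a * Complex.arg s : ℝ) : ℂ) * Complex.I) := by
  rw [Complex.cpow_def_of_ne_zero hs]
  rw [Complex.log]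
  have : (↑(Real.log (‖s‖)) + ↑(Complex.arg s) * Complex.I) * (a : ℂ)
      = ((a * Real.log (‖s‖) : ℝ) : ℂ) + ((a * Complex.arg s : ℝ) : ℂ) * Complex.I := by
    push_cast; ring
  rw [this, Complex.exp_add]
  congr 1
  rw [← Complex.ofReal_exp]
  norm_cast
  rw [Real.rpow_def_of_pos (norm_pos_iff.mpr hs)]
  ring_nf

lemma re_cpow (s : ℂ) (hs : s ≠ 0) (a : ℝ) :
    (s ^ (a : ℂ)).re = ‖s‖ ^ a * Real.cos (a * Complex.arg s) := by
  rw [cpow_polar s hs a]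
  simp [Complex.ext_iff, Complex.exp_re, Complex.exp_im, Complex.mul_re, Complex.mul_im]

lemma im_cpow (s : ℂ) (hs : s ≠ 0) (a : ℝ) :
    (s ^ (a : ℂ)).im = ‖s‖ ^ a * Real.sin (a * Complex.arg s) := by
  rw [cpow_polar s hs a]
  simp [Complex.ext_iff, Complex.exp_re, Complex.exp_im, Complex.mul_re, Complex.mul_im]

lemma abs_cpow_real' (s : ℂ) (hs : s ≠ 0) (a : ℝ) :
    ‖s ^ (a : ℂ)‖ = ‖s‖ ^ a := by
  rw [Complex.norm_cpow_of_ne_zero hs]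
  simp

lemma re_cpow_pos {α : ℝ} (hα0 : 0 < α) (hα1 : α ≤ 1) {s : ℂ} (hs : 0 < s.re) :
    0 < (s ^ (α : ℂ)).re := by
  have hs0 : s ≠ 0 := fun h => by simp [h] at hs
  rw [re_cpow s hs0 α]
  have harg : |Complex.arg s| < π / 2 := Complex.abs_arg_lt_pi_div_two_iff.2 (Or.inl hs)
  have : |α * Complex.arg s| < π / 2 := by
    rw [abs_mul, abs_of_pos hα0]
    calc α * |Complex.arg s| ≤ 1 * |Complex.arg s| := by
          apply mul_le_mul_of_nonneg_right hα1 (abs_nonneg _)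
      _ = |Complex.arg s| := one_mul _
      _ < π / 2 := harg
  have hcos : 0 < Real.cos (α * Complex.arg s) := by
    apply Real.cos_pos_of_mem_Ioo
    constructor <;> [linarith [abs_lt.1 this |>.1]; linarith [abs_lt.1 this |>.2]]
  exact mul_pos (Real.rpow_pos_of_pos (norm_pos_iff.mpr hs0) α) hcos

lemma re_cpow_nonneg {α : ℝ} (hα0 : 0 < α) (hα1 : α ≤ 1) {s : ℂ} (hs : 0 ≤ s.re) (hs0 : s ≠ 0) :
    0 ≤ (s ^ (α : ℂ)).re := by
  rw [re_cpow s hs0 α]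
  have harg : |Complex.arg s| ≤ π / 2 := Complex.abs_arg_le_pi_div_two_iff.2 hs
  have : |α * Complex.arg s| ≤ π / 2 := by
    rw [abs_mul, abs_of_pos hα0]
    calc α * |Complex.arg s| ≤ 1 * |Complex.arg s| :=
          mul_le_mul_of_nonneg_right hα1 (abs_nonneg _)
      _ ≤ π / 2 := by simpa using harg
  have hcos : 0 ≤ Real.cos (α * Complex.arg s) := by
    apply Real.cos_nonneg_of_mem_Icc
    constructor <;> [linarith [abs_le.1 this |>.1]; linarith [abs_le.1 this |>.2]]
  positivity



section
variable {α β γ ω : ℝ} (hω : ω < 0) (hα0 : 0 < α) (hα1 : α ≤ 1) (hαγ : 0 < α * γ)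
  (hβ0 : α * γ ≤ β) (hβ1 : β ≤ 1)

lemma slit_of_re_nonneg {s : ℂ} (hs : 0 ≤ s.re) (hs0 : s ≠ 0) : s ∈ Complex.slitPlane := by
  rw [Complex.mem_slitPlane_iff]
  rcases lt_or_eq_of_le hs with h | h
  · exact Or.inl h
  · right
    intro him
    exact hs0 (Complex.ext (by simp [← h]) him)

include hω hα0 hα1 in
lemma re_w_pos {s : ℂ} (hs : 0 ≤ s.re) (hs0 : s ≠ 0) :
    0 < (s ^ ((α : ℝ) : ℂ) - (ω : ℂ)).re := by
  have h1 : 0 ≤ (s ^ ((α : ℝ) : ℂ)).re := re_cpow_nonneg hα0 hα1 hs hs0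
  simp only [Complex.sub_re, Complex.ofReal_re]
  linarith

include hω hα0 hα1 in
lemma w_slit {s : ℂ} (hs : 0 ≤ s.re) (hs0 : s ≠ 0) :
    s ^ ((α : ℝ) : ℂ) - (ω : ℂ) ∈ Complex.slitPlane :=
  Complex.mem_slitPlane_iff.2 (Or.inl (re_w_pos hω hα0 hα1 hs hs0))

include hω hα0 hα1 in
lemma analyticAt_Fc {s : ℂ} (hs : 0 ≤ s.re) (hs0 : s ≠ 0) :
    AnalyticAt ℂ (Fc α β γ ω) s := by
  have h1 : AnalyticAt ℂ (fun z : ℂ => z ^ ((β - α * γ : ℝ) : ℂ)) s :=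
    (analyticAt_id).cpow analyticAt_const (slit_of_re_nonneg hs hs0)
  have h2 : AnalyticAt ℂ (fun z : ℂ => z ^ ((α : ℝ) : ℂ) - (ω : ℂ)) s :=
    ((analyticAt_id).cpow analyticAt_const (slit_of_re_nonneg hs hs0)).sub analyticAt_const
  have h3 : AnalyticAt ℂ (fun z : ℂ => (z ^ ((α : ℝ) : ℂ) - (ω : ℂ)) ^ ((γ : ℝ) : ℂ)) s :=
    h2.cpow analyticAt_const (w_slit hω hα0 hα1 hs hs0)
  exact h1.mul h3

/-- explicit derivative value -/
noncomputable def Dval (α β γ ω : ℝ) (s : ℂ) : ℂ :=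
  ((β - α * γ : ℝ) : ℂ) * s ^ (((β - α * γ : ℝ) : ℂ) - 1) *
      (s ^ ((α : ℝ) : ℂ) - (ω : ℂ)) ^ ((γ : ℝ) : ℂ) +
    s ^ ((β - α * γ : ℝ) : ℂ) *
      (((γ : ℝ) : ℂ) * (s ^ ((α : ℝ) : ℂ) - (ω : ℂ)) ^ (((γ : ℝ) : ℂ) - 1) *
        (((α : ℝ) : ℂ) * s ^ (((α : ℝ) : ℂ) - 1)))

include hω hα0 hα1 in
lemma hasDerivAt_Fc {s : ℂ} (hs : 0 ≤ s.re) (hs0 : s ≠ 0) :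
    HasDerivAt (Fc α β γ ω) (Dval α β γ ω s) s := by
  have hslit := slit_of_re_nonneg hs hs0
  have h1 : HasDerivAt (fun z : ℂ => z ^ ((β - α * γ : ℝ) : ℂ))
      (((β - α * γ : ℝ) : ℂ) * s ^ (((β - α * γ : ℝ) : ℂ) - 1)) s :=
    (Complex.hasStrictDerivAt_cpow_const hslit).hasDerivAt
  have h2 : HasDerivAt (fun z : ℂ => z ^ ((α : ℝ) : ℂ) - (ω : ℂ))
      (((α : ℝ) : ℂ) * s ^ (((α : ℝ) : ℂ) - 1)) s :=
    ((Complex.hasStrictDerivAt_cpow_const hslit).hasDerivAt).sub_const _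
  have h3 : HasDerivAt (fun z : ℂ => (z ^ ((α : ℝ) : ℂ) - (ω : ℂ)) ^ ((γ : ℝ) : ℂ))
      (((γ : ℝ) : ℂ) * (s ^ ((α : ℝ) : ℂ) - (ω : ℂ)) ^ (((γ : ℝ) : ℂ) - 1) *
        (((α : ℝ) : ℂ) * s ^ (((α : ℝ) : ℂ) - 1))) s :=
    h2.cpow_const (w_slit hω hα0 hα1 hs hs0)
  exact h1.mul h3

end

lemma Dval_ne {α β γ ω : ℝ} (hω : ω < 0) (hα0 : 0 < α) (hα1 : α ≤ 1) (hαγ : 0 < α * γ)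
    (hβ0 : α * γ ≤ β) {s : ℂ} (hs : 0 < s.re) : Dval α β γ ω s ≠ 0 := by
  intro hD
  set c : ℂ := ((β - α * γ : ℝ) : ℂ) with hc
  set a : ℂ := ((α : ℝ) : ℂ) with ha
  set g : ℂ := ((γ : ℝ) : ℂ) with hg
  have hs0 : s ≠ 0 := fun h => by simp [h] at hs
  set w : ℂ := s ^ a - (ω : ℂ) with hwdef
  have hwre : 0 < w.re := re_w_pos hω hα0 hα1 hs.le hs0
  have hw0 : w ≠ 0 := fun h => by simp [h] at hwre
  have e1 : s ^ ((1 : ℂ) - c) * s ^ (c - 1) = 1 := by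
    rw [← Complex.cpow_add _ _ hs0]
    norm_num
  have e2 : w ^ ((1 : ℂ) - g) * w ^ g = w := by
    rw [← Complex.cpow_add _ _ hw0]
    norm_num
  have e3 : s ^ ((1 : ℂ) - c) * s ^ c * s ^ (a - 1) = s ^ a := by
    rw [← Complex.cpow_add _ _ hs0, ← Complex.cpow_add _ _ hs0]
    ring_nf
  have e4 : w ^ ((1 : ℂ) - g) * w ^ (g - 1) = 1 := by
    rw [← Complex.cpow_add _ _ hw0]
    norm_num
  have h : s ^ ((1 : ℂ) - c) * w ^ ((1 : ℂ) - g) * Dval α β γ ω s = 0 := by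
    rw [hD, mul_zero]
  rw [Dval] at h
  rw [← hc, ← ha, ← hg, ← hwdef] at h
  have hkey : c * w + g * (a * s ^ a) = 0 := by
    linear_combination h - c * e2 - c * (w ^ ((1:ℂ) - g) * w ^ g) * e1 - g * a * e3
      - g * a * (s ^ ((1:ℂ) - c) * s ^ c * s ^ (a - 1)) * e4
  have h3 : ((β : ℝ) : ℂ) * s ^ ((α : ℝ) : ℂ) = ((β - α * γ : ℝ) : ℂ) * ((ω : ℝ) : ℂ) := by
    simp only [hc, hg, ha, hwdef] at hkey
    push_cast at hkey ⊢
    linear_combination hkey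
  have h4 := congrArg Complex.re h3
  have hre1 : (((β : ℝ) : ℂ) * s ^ ((α : ℝ) : ℂ)).re = β * (s ^ ((α : ℝ) : ℂ)).re := by
    simp [Complex.mul_re]
  have hre2 : (((β - α * γ : ℝ) : ℂ) * ((ω : ℝ) : ℂ)).re = (β - α * γ) * ω := by
    simp [Complex.mul_re]
  rw [hre1, hre2] at h4
  have hβpos : 0 < β := lt_of_lt_of_le hαγ hβ0
  have hrepos : 0 < (s ^ ((α : ℝ) : ℂ)).re := re_cpow_pos hα0 hα1 hs
  nlinarith [mul_nonneg (sub_nonneg.2 hβ0) (neg_nonneg.2 hω.le)]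




lemma Fc_mem_Psi {α β γ ω : ℝ} (hω : ω < 0) (hα0 : 0 < α) (hα1 : α ≤ 1) (hαγ : 0 < α * γ)
    (hβ0 : α * γ ≤ β) {s : ℂ} (hre : s.re = 0) (him : 0 < s.im) :
    Fc α β γ ω s ∈ PsiSet α β γ ω := by
  have hγ : 0 < γ := by nlinarith
  have hπ := Real.pi_pos
  have hω' : 0 < -ω := by linarith
  have hs0 : s ≠ 0 := fun h => by simp [h] at him
  have harg : s.arg = π / 2 := Complex.arg_eq_pi_div_two_iff.2 ⟨hre, him⟩
  set u : ℝ := ‖s‖ with hu_def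
  have hu : 0 < u := norm_pos_iff.mpr hs0
  set X : ℝ := u ^ α with hX_def
  have hX : 0 < X := Real.rpow_pos_of_pos hu α
  set c₀ : ℝ := Real.cos (α * π / 2) with hc0_def
  set s₀ : ℝ := Real.sin (α * π / 2) with hs0_def
  have hs₀ : 0 < s₀ := Real.sin_pos_of_pos_of_lt_pi (by positivity) (by nlinarith)
  have hc₀ : 0 ≤ c₀ := Real.cos_nonneg_of_mem_Icc ⟨by nlinarith, by nlinarith⟩
  set w : ℂ := s ^ ((α : ℝ) : ℂ) - (ω : ℂ) with hw_def
  have hwre : w.re = X * c₀ - ω := by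
    rw [hw_def, Complex.sub_re, re_cpow s hs0 α, harg, Complex.ofReal_re, hX_def, hu_def,
      hc0_def, show α * (π / 2) = α * π / 2 by ring]
  have hwim : w.im = X * s₀ := by
    rw [hw_def, Complex.sub_im, im_cpow s hs0 α, harg, Complex.ofReal_im, hX_def, hu_def,
      hs0_def, show α * (π / 2) = α * π / 2 by ring]
    ring
  have hwrepos : 0 < w.re := by rw [hwre]; nlinarith
  have hwimpos : 0 < w.im := by rw [hwim]; positivity
  have hw0 : w ≠ 0 := fun h => by simp [h] at hwrepos
  set A : ℝ := ‖w‖ with hA_def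
  have hA : 0 < A := norm_pos_iff.mpr hw0
  set θ : ℝ := w.arg with hθ_def
  have hcosθ : Real.cos θ = w.re / A := Complex.cos_arg hw0
  have hsinθ : Real.sin θ = w.im / A := Complex.sin_arg w
  have hθabs : |θ| < π / 2 := Complex.abs_arg_lt_pi_div_two_iff.2 (Or.inl hwrepos)
  have hθpos : 0 < θ := by
    by_contra h
    push_neg at h
    have h2 : Real.sin θ ≤ 0 :=
      Real.sin_nonpos_of_nonpos_of_neg_pi_le h (by linarith [abs_lt.1 hθabs |>.1])
    rw [hsinθ] at h2
    have : 0 < w.im / A := div_pos hwimpos hA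
    linarith
  have hsinsub : Real.sin (α * π / 2 - θ) = -ω * s₀ / A := by
    rw [Real.sin_sub, hcosθ, hsinθ, hwre, hwim]
    field_simp
    ring
  have hθlt : θ < α * π / 2 := by
    by_contra h
    push_neg at h
    have h2 : Real.sin (α * π / 2 - θ) ≤ 0 :=
      Real.sin_nonpos_of_nonpos_of_neg_pi_le (by linarith)
        (by have := abs_lt.1 hθabs; nlinarith)
    rw [hsinsub] at h2
    have : 0 < -ω * s₀ / A := by positivity
    linarith
  have hsinθval : Real.sin θ = X * s₀ / A := by rw [hsinθ, hwim]
  refine ⟨θ, ⟨hθpos, hθlt⟩, ?_⟩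
  -- modulus identity
  have hαne : α ≠ 0 := hα0.ne'
  have habsω : |ω| = -ω := abs_of_neg hω
  have hM : |ω| ^ (β / α) * Real.sin θ ^ (β / α - γ) * s₀ ^ γ *
      Real.sin (α * π / 2 - θ) ^ (-(β / α)) = u ^ (β - α * γ) * A ^ γ := by
    rw [habsω, hsinθval, hsinsub]
    have l1 : 0 < X * s₀ / A := by positivity
    have l2 : 0 < -ω * s₀ / A := by positivity
    have lhspos : 0 < (-ω) ^ (β / α) * (X * s₀ / A) ^ (β / α - γ) * s₀ ^ γ *
        (-ω * s₀ / A) ^ (-(β / α)) := by positivity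
    have rhspos : 0 < u ^ (β - α * γ) * A ^ γ := by positivity
    have hlog : Real.log ((-ω) ^ (β / α) * (X * s₀ / A) ^ (β / α - γ) * s₀ ^ γ *
        (-ω * s₀ / A) ^ (-(β / α))) = Real.log (u ^ (β - α * γ) * A ^ γ) := by
      rw [Real.log_mul (by positivity) (by positivity),
        Real.log_mul (by positivity) (by positivity),
        Real.log_mul (by positivity) (by positivity),
        Real.log_mul (by positivity) (by positivity),
        Real.log_rpow hω', Real.log_rpow l1, Real.log_rpow hs₀, Real.log_rpow l2,
        Real.log_rpow hu, Real.log_rpow hA,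
        Real.log_div (by positivity) (by positivity),
        Real.log_div (by positivity) (by positivity),
        Real.log_mul (by positivity) (by positivity),
        Real.log_mul (by positivity) (by positivity)]
      have hlogX : Real.log X = α * Real.log u := Real.log_rpow hu α
      rw [hlogX]
      field_simp
      ring
    calc (-ω) ^ (β / α) * (X * s₀ / A) ^ (β / α - γ) * s₀ ^ γ * (-ω * s₀ / A) ^ (-(β / α))
        = Real.exp (Real.log ((-ω) ^ (β / α) * (X * s₀ / A) ^ (β / α - γ) * s₀ ^ γ *
            (-ω * s₀ / A) ^ (-(β / α)))) := (Real.exp_log lhspos).symm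
      _ = Real.exp (Real.log (u ^ (β - α * γ) * A ^ γ)) := by rw [hlog]
      _ = u ^ (β - α * γ) * A ^ γ := Real.exp_log rhspos
  -- assemble
  rw [Lam, hM]
  rw [Fc, ← hw_def, cpow_polar s hs0 (β - α * γ), cpow_polar w hw0 γ, harg, ← hu_def, ← hA_def,
    ← hθ_def]
  have hexp : Complex.exp ((((β - α * γ) * (π / 2) : ℝ) : ℂ) * Complex.I) *
      Complex.exp (((γ * θ : ℝ) : ℂ) * Complex.I) =
      Complex.exp (Complex.I * ((γ * θ + (β - α * γ) * π / 2 : ℝ) : ℂ)) := by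
    rw [← Complex.exp_add]
    congr 1
    push_cast
    ring
  rw [Complex.ofReal_mul, ← hexp]
  ring

lemma Fc_mem_PsiBar {α β γ ω : ℝ} (hω : ω < 0) (hα0 : 0 < α) (hα1 : α ≤ 1) (hαγ : 0 < α * γ)
    (hβ0 : α * γ ≤ β) {s : ℂ} (hre : s.re = 0) (him : s.im < 0) :
    Fc α β γ ω s ∈ PsiBar α β γ ω := by
  have hs0 : s ≠ 0 := fun h => by simp [h] at him
  have hargs : s.arg ≠ π := by
    intro hh
    rw [Complex.arg_eq_pi_iff] at hh
    linarith [hh.1, hh.2]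
  have hwre := re_w_pos hω hα0 hα1 (le_of_eq hre.symm) hs0
  have hargw : (s ^ ((α : ℝ) : ℂ) - (ω : ℂ)).arg ≠ π := by
    intro hh
    rw [Complex.arg_eq_pi_iff] at hh
    linarith [hh.1]
  have h2 : (starRingEnd ℂ) s ^ ((α : ℝ) : ℂ) = (starRingEnd ℂ) (s ^ ((α : ℝ) : ℂ)) := by
    rw [Complex.conj_cpow _ _ hargs, Complex.conj_ofReal]
  have key : Fc α β γ ω ((starRingEnd ℂ) s) = (starRingEnd ℂ) (Fc α β γ ω s) := by
    rw [Fc, Fc, map_mul]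
    congr 1
    · rw [Complex.conj_cpow _ _ hargs, Complex.conj_ofReal]
    · have h3 : (starRingEnd ℂ) s ^ ((α : ℝ) : ℂ) - (ω : ℂ) =
          (starRingEnd ℂ) (s ^ ((α : ℝ) : ℂ) - (ω : ℂ)) := by
        rw [map_sub, ← h2, Complex.conj_ofReal]
      rw [h3, Complex.conj_cpow _ _ hargw, Complex.conj_ofReal]
  show (starRingEnd ℂ) (Fc α β γ ω s) ∈ PsiSet α β γ ω
  rw [← key]
  exact Fc_mem_Psi hω hα0 hα1 hαγ hβ0 (by simp [hre]) (by rw [Complex.conj_im]; linarith)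

lemma boundary_ne {α β γ ω : ℝ} (hω : ω < 0) (hα0 : 0 < α) (hα1 : α ≤ 1) (hαγ : 0 < α * γ)
    (hβ0 : α * γ ≤ β) {lam : ℂ} (hcl : lam ∉ closure (PsiSet α β γ ω ∪ PsiBar α β γ ω))
    {s : ℂ} (hre : s.re = 0) (hs0 : s ≠ 0) : Fc α β γ ω s ≠ lam := by
  intro heq
  apply hcl
  rw [← heq]
  apply subset_closure
  rcases lt_trichotomy s.im 0 with h | h | h
  · exact Or.inr (Fc_mem_PsiBar hω hα0 hα1 hαγ hβ0 hre h)
  · exact absurd (Complex.ext hre h) hs0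
  · exact Or.inl (Fc_mem_Psi hω hα0 hα1 hαγ hβ0 hre h)

lemma Fc_zero_of_ne {α β γ ω : ℝ} (h : β - α * γ ≠ 0) : Fc α β γ ω 0 = 0 := by
  rw [Fc, Complex.zero_cpow (by exact_mod_cast h), zero_mul]

lemma Fc_zero_of_eq {α β γ ω : ℝ} (hα0 : 0 < α) (hω : ω < 0) (h : β - α * γ = 0) :
    Fc α β γ ω 0 = (((-ω) ^ γ : ℝ) : ℂ) := by
  rw [Fc, h, Complex.ofReal_zero, Complex.cpow_zero, one_mul,
    Complex.zero_cpow (by exact_mod_cast hα0.ne' : ((α : ℝ) : ℂ) ≠ 0), zero_sub,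
    ← Complex.ofReal_neg, Complex.ofReal_cpow (by linarith)]

lemma negomega_mem_closure {α β γ ω : ℝ} (hω : ω < 0) (hα0 : 0 < α) (hα1 : α ≤ 1)
    (hαγ : 0 < α * γ) (h : β - α * γ = 0) :
    (((-ω) ^ γ : ℝ) : ℂ) ∈ closure (PsiSet α β γ ω) := by
  have hπ := Real.pi_pos
  have hγ : 0 < γ := by nlinarith
  have hω' : 0 < -ω := by linarith
  set s₀ : ℝ := Real.sin (α * π / 2) with hs0_def
  have hs₀ : 0 < s₀ := Real.sin_pos_of_pos_of_lt_pi (by positivity) (by nlinarith)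
  have hba : β / α = γ := by field_simp; nlinarith [h]
  have hG : ∀ θ : ℝ, Lam α β γ ω θ =
      ((|ω| ^ γ * s₀ ^ γ * Real.sin (α * π / 2 - θ) ^ (-γ) : ℝ) : ℂ) *
        Complex.exp (Complex.I * ((γ * θ : ℝ) : ℂ)) := by
    intro θ
    rw [Lam, hba, h, sub_self, Real.rpow_zero]
    rw [← hs0_def]
    norm_num
  have hcont : ContinuousAt (fun θ : ℝ =>
      ((|ω| ^ γ * s₀ ^ γ * Real.sin (α * π / 2 - θ) ^ (-γ) : ℝ) : ℂ) *
        Complex.exp (Complex.I * ((γ * θ : ℝ) : ℂ))) 0 := by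
    apply ContinuousAt.mul
    · apply Complex.continuous_ofReal.continuousAt.comp
      apply ContinuousAt.mul continuousAt_const
      have c1 : ContinuousAt (fun θ : ℝ => Real.sin (α * π / 2 - θ)) 0 :=
        (Real.continuous_sin.comp (continuous_const.sub continuous_id)).continuousAt
      have c2 : ContinuousAt (fun x : ℝ => x ^ (-γ)) (Real.sin (α * π / 2 - 0)) := by
        apply Real.continuousAt_rpow_const
        left
        rw [sub_zero]
        exact hs₀.ne'
      exact ContinuousAt.comp (g := fun x : ℝ => x ^ (-γ))
        (f := fun θ : ℝ => Real.sin (α * π / 2 - θ)) c2 c1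
    · apply Complex.continuous_exp.continuousAt.comp
      exact (continuous_const.mul (Complex.continuous_ofReal.comp
        (continuous_const.mul continuous_id))).continuousAt
  have hvalr : |ω| ^ γ * s₀ ^ γ * Real.sin (α * π / 2 - 0) ^ (-γ) = (-ω) ^ γ := by
    rw [sub_zero, ← hs0_def, mul_assoc, ← Real.rpow_add hs₀, add_neg_cancel, Real.rpow_zero,
      mul_one, abs_of_neg hω]
  have hval : ((|ω| ^ γ * s₀ ^ γ * Real.sin (α * π / 2 - 0) ^ (-γ) : ℝ) : ℂ) *
      Complex.exp (Complex.I * ((γ * 0 : ℝ) : ℂ)) = (((-ω) ^ γ : ℝ) : ℂ) := by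
    rw [mul_zero, Complex.ofReal_zero, mul_zero, Complex.exp_zero, mul_one, hvalr]
  have htend : Filter.Tendsto (Lam α β γ ω) (nhdsWithin 0 (Set.Ioi 0))
      (nhds (((-ω) ^ γ : ℝ) : ℂ)) := by
    have h2 : Filter.Tendsto (fun θ : ℝ =>
        ((|ω| ^ γ * s₀ ^ γ * Real.sin (α * π / 2 - θ) ^ (-γ) : ℝ) : ℂ) *
          Complex.exp (Complex.I * ((γ * θ : ℝ) : ℂ))) (nhdsWithin 0 (Set.Ioi 0))
        (nhds (((|ω| ^ γ * s₀ ^ γ * Real.sin (α * π / 2 - 0) ^ (-γ) : ℝ) : ℂ) *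
          Complex.exp (Complex.I * ((γ * 0 : ℝ) : ℂ)))) := hcont.continuousWithinAt
    rw [hval] at h2
    exact Filter.Tendsto.congr (fun θ => (hG θ).symm) h2
  apply mem_closure_of_tendsto htend
  have hIoo : Set.Ioo (0:ℝ) (α * π / 2) ∈ nhdsWithin (0:ℝ) (Set.Ioi 0) := by
    apply Ioo_mem_nhdsGT_of_mem
    exact ⟨le_refl 0, by positivity⟩
  filter_upwards [hIoo] with θ hθ
  exact ⟨θ, hθ, rfl⟩

lemma Fc_zero_ne {α β γ ω : ℝ} (hω : ω < 0) (hα0 : 0 < α) (hα1 : α ≤ 1) (hαγ : 0 < α * γ)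
    {lam : ℂ} (hlam : lam ≠ 0) (hcl : lam ∉ closure (PsiSet α β γ ω ∪ PsiBar α β γ ω)) :
    Fc α β γ ω 0 ≠ lam := by
  by_cases h : β - α * γ = 0
  · rw [Fc_zero_of_eq hα0 hω h]
    intro heq
    apply hcl
    rw [← heq]
    exact closure_mono Set.subset_union_left (negomega_mem_closure hω hα0 hα1 hαγ h)
  · rw [Fc_zero_of_ne h]
    exact fun heq => hlam heq.symm

lemma abs_Fc_lower {α β γ ω : ℝ} (hω : ω < 0) (hα0 : 0 < α) (hα1 : α ≤ 1) (hαγ : 0 < α * γ)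
    (hβ0 : α * γ ≤ β) {s : ℂ} (hs : 0 ≤ s.re) (hs0 : s ≠ 0) :
    ‖s‖ ^ β ≤ ‖Fc α β γ ω s‖ := by
  have hγ : 0 < γ := by nlinarith
  set u : ℝ := ‖s‖ with hu_def
  have hu : 0 < u := norm_pos_iff.mpr hs0
  set w : ℂ := s ^ ((α : ℝ) : ℂ) - (ω : ℂ) with hw_def
  have hwre : 0 < w.re := re_w_pos hω hα0 hα1 hs hs0
  have hw0 : w ≠ 0 := fun h => by simp [h] at hwre
  have hrea : 0 ≤ (s ^ ((α : ℝ) : ℂ)).re := re_cpow_nonneg hα0 hα1 hs hs0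
  have habsa : ‖s ^ ((α : ℝ) : ℂ)‖ = u ^ α := abs_cpow_real' s hs0 α
  have hwge : u ^ α ≤ ‖w‖ := by
    rw [← habsa]
    have h1 : Complex.normSq (s ^ ((α : ℝ) : ℂ)) ≤ Complex.normSq w := by
      rw [Complex.normSq_apply, Complex.normSq_apply, hw_def]
      simp only [Complex.sub_re, Complex.sub_im, Complex.ofReal_re, Complex.ofReal_im, sub_zero]
      nlinarith
    rw [Complex.norm_def, Complex.norm_def]
    exact Real.sqrt_le_sqrt h1
  calc u ^ β = u ^ (β - α * γ) * u ^ (α * γ) := by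
        rw [← Real.rpow_add hu]; ring_nf
    _ = u ^ (β - α * γ) * (u ^ α) ^ γ := by rw [← Real.rpow_mul hu.le]
    _ ≤ u ^ (β - α * γ) * ‖w‖ ^ γ := by
        apply mul_le_mul_of_nonneg_left _ (Real.rpow_nonneg hu.le _)
        exact Real.rpow_le_rpow (Real.rpow_nonneg hu.le α) hwge hγ.le
    _ = ‖Fc α β γ ω s‖ := by
        rw [Fc, norm_mul, abs_cpow_real' s hs0, ← hw_def, abs_cpow_real' w hw0]

lemma exists_R {α β γ ω : ℝ} (hω : ω < 0) (hα0 : 0 < α) (hα1 : α ≤ 1) (hαγ : 0 < α * γ)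
    (hβ0 : α * γ ≤ β) (lam₀ : ℂ) :
    ∃ R ≥ 1, ∀ s : ℂ, 0 ≤ s.re → R < ‖s‖ →
      ‖lam₀‖ + 1 < ‖Fc α β γ ω s‖ := by
  have hβ : 0 < β := by nlinarith
  set K : ℝ := ‖lam₀‖ + 2 with hK_def
  have hK : 0 < K := by positivity
  refine ⟨max 1 (K ^ (1/β)), le_max_left _ _, fun s hs hRs => ?_⟩
  have hR1 : (1:ℝ) ≤ max 1 (K ^ (1/β)) := le_max_left _ _
  have hs0 : s ≠ 0 := by
    intro h
    rw [h] at hRs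
    simp at hRs
    linarith
  have h1 : K ≤ (max 1 (K ^ (1/β))) ^ β := by
    calc K = (K ^ (1/β)) ^ β := by
          rw [one_div, Real.rpow_inv_rpow hK.le hβ.ne']
      _ ≤ (max 1 (K ^ (1/β))) ^ β :=
          Real.rpow_le_rpow (Real.rpow_nonneg hK.le _) (le_max_right _ _) hβ.le
  have h2 : (max 1 (K ^ (1/β))) ^ β < ‖s‖ ^ β :=
    Real.rpow_lt_rpow (by positivity) hRs hβ
  have h3 := abs_Fc_lower hω hα0 hα1 hαγ hβ0 hs hs0
  simp only [hK_def] at h1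
  linarith

lemma exists_delta {α β γ ω : ℝ} (hω : ω < 0) (hα0 : 0 < α) (hα1 : α ≤ 1) (hαγ : 0 < α * γ)
    (hβ0 : α * γ ≤ β) {lam₀ : ℂ} (hlam₀ : lam₀ ≠ 0)
    (hcl : lam₀ ∉ closure (PsiSet α β γ ω ∪ PsiBar α β γ ω)) :
    ∃ δ > 0, ∃ m > 0, ∀ s : ℂ, s ≠ 0 → ‖s‖ < δ →
      m ≤ ‖Fc α β γ ω s - lam₀‖ := by
  have hγ : 0 < γ := by nlinarith
  have hω' : 0 < -ω := by linarith
  by_cases hc : β - α * γ = 0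
  · -- Fc = (z^α - ω)^γ, continuous at 0 with value (-ω)^γ ≠ lam₀
    set H : ℂ → ℂ := fun z => (z ^ ((α : ℝ) : ℂ) - (ω : ℂ)) ^ ((γ : ℝ) : ℂ) with hH_def
    have hFH : ∀ z : ℂ, Fc α β γ ω z = H z := by
      intro z
      rw [Fc, hc, Complex.ofReal_zero, Complex.cpow_zero, one_mul]
    have hcont : ContinuousAt H 0 := by
      have hin : ContinuousAt (fun z : ℂ => z ^ ((α : ℝ) : ℂ) - (ω : ℂ)) 0 := by
        apply ContinuousAt.sub _ continuousAt_const
        exact Filter.Tendsto.comp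
          (Complex.continuousAt_cpow_zero_of_re_pos (z := ((α : ℝ) : ℂ)) (by simpa using hα0))
          (continuousAt_id.prodMk continuousAt_const)
      have hval : (fun z : ℂ => z ^ ((α : ℝ) : ℂ) - (ω : ℂ)) 0 = ((-ω : ℝ) : ℂ) := by
        simp only []
        rw [Complex.zero_cpow (by exact_mod_cast hα0.ne' : ((α : ℝ) : ℂ) ≠ 0), zero_sub]
        push_cast
        ring
      have hout : ContinuousAt (fun w : ℂ => w ^ ((γ : ℝ) : ℂ)) ((-ω : ℝ) : ℂ) := by
        apply continuousAt_cpow_const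
        rw [Complex.mem_slitPlane_iff]
        left
        simpa using hω'
      rw [hH_def]
      exact ContinuousAt.comp (g := fun w : ℂ => w ^ ((γ : ℝ) : ℂ))
        (f := fun z : ℂ => z ^ ((α : ℝ) : ℂ) - (ω : ℂ)) (by rw [show (0:ℂ) ^ ((α : ℝ) : ℂ) - (ω : ℂ) = ((-ω : ℝ) : ℂ) from hval]; exact hout) hin
    have hH0 : H 0 = (((-ω) ^ γ : ℝ) : ℂ) := by
      rw [← hFH 0, Fc_zero_of_eq hα0 hω hc]
    have hne : lam₀ ≠ H 0 := by
      rw [hH0]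
      intro heq
      apply hcl
      rw [heq]
      exact closure_mono Set.subset_union_left (negomega_mem_closure hω hα0 hα1 hαγ hc)
    set m₁ : ℝ := ‖H 0 - lam₀‖ with hm1_def
    have hm₁ : 0 < m₁ := by
      rw [hm1_def]
      simp only [norm_pos_iff, sub_ne_zero]
      exact fun h => hne h.symm
    obtain ⟨δ, hδ, hδprop⟩ := Metric.continuousAt_iff.1 hcont (m₁ / 2) (by linarith)
    refine ⟨δ, hδ, m₁ / 2, by linarith, fun s hs0 hsδ => ?_⟩
    have h1 : dist (H s) (H 0) < m₁ / 2 := hδprop (by simpa [Complex.dist_eq] using hsδ)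
    rw [Complex.dist_eq] at h1
    rw [hFH]
    have htri : m₁ ≤ ‖H s - lam₀‖ + ‖H s - H 0‖ := by
      calc m₁ = ‖H 0 - lam₀‖ := hm1_def
        _ ≤ ‖H 0 - H s‖ + ‖H s - lam₀‖ := by
            have := norm_add_le (H 0 - H s) (H s - lam₀)
            simpa using this
        _ = ‖H s - lam₀‖ + ‖H s - H 0‖ := by
            rw [← norm_sub_rev (H 0) (H s)]; ring
    linarith
  · -- c > 0 : |Fc| small near 0
    have hcpos : 0 < β - α * γ := lt_of_le_of_ne (by nlinarith) (Ne.symm hc)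
    set m : ℝ := ‖lam₀‖ / 2 with hm_def
    have hm : 0 < m := by
      have : 0 < ‖lam₀‖ := norm_pos_iff.mpr hlam₀
      positivity
    set W : ℝ := 1 + (-ω) with hW_def
    have hW : 0 < W := by linarith
    have hWγ : 0 < W ^ γ := Real.rpow_pos_of_pos hW γ
    set δ₂ : ℝ := (m / W ^ γ) ^ (1 / (β - α * γ)) with hδ2_def
    have hδ₂ : 0 < δ₂ := Real.rpow_pos_of_pos (by positivity) _
    refine ⟨min 1 δ₂, by positivity, m, hm, fun s hs0 hsδ => ?_⟩
    have hu : 0 < ‖s‖ := norm_pos_iff.mpr hs0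
    have hu1 : ‖s‖ < 1 := lt_of_lt_of_le hsδ (min_le_left _ _)
    have hu2 : ‖s‖ < δ₂ := lt_of_lt_of_le hsδ (min_le_right _ _)
    have habsFc : ‖Fc α β γ ω s‖ < m := by
      by_cases hw : s ^ ((α : ℝ) : ℂ) - (ω : ℂ) = 0
      · rw [Fc, hw, Complex.zero_cpow (by exact_mod_cast hγ.ne' : ((γ : ℝ) : ℂ) ≠ 0), mul_zero]
        simpa using hm
      · have e1 : ‖Fc α β γ ω s‖ =
            ‖s‖ ^ (β - α * γ) * ‖s ^ ((α : ℝ) : ℂ) - (ω : ℂ)‖ ^ γ := by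
          rw [Fc, norm_mul, abs_cpow_real' s hs0, abs_cpow_real' _ hw]
        have e2 : ‖s ^ ((α : ℝ) : ℂ) - (ω : ℂ)‖ ≤ W := by
          calc ‖s ^ ((α : ℝ) : ℂ) - (ω : ℂ)‖
              ≤ ‖s ^ ((α : ℝ) : ℂ)‖ + ‖(ω : ℂ)‖ :=
                norm_sub_le _ _
            _ ≤ 1 + (-ω) := by
                have h3 : ‖s ^ ((α : ℝ) : ℂ)‖ = ‖s‖ ^ α :=
                  abs_cpow_real' s hs0 α
                have h4 : ‖s‖ ^ α ≤ 1 :=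
                  Real.rpow_le_one hu.le hu1.le hα0.le
                have h5 : ‖(ω : ℂ)‖ = -ω := by
                  rw [Complex.norm_real, Real.norm_eq_abs, abs_of_neg hω]
                rw [h3, h5]; linarith
        have e3 : ‖s‖ ^ (β - α * γ) < δ₂ ^ (β - α * γ) :=
          Real.rpow_lt_rpow hu.le hu2 hcpos
        have e4 : δ₂ ^ (β - α * γ) = m / W ^ γ := by
          rw [hδ2_def, one_div, Real.rpow_inv_rpow (by positivity) hcpos.ne']
        calc ‖Fc α β γ ω s‖
            = ‖s‖ ^ (β - α * γ) * ‖s ^ ((α : ℝ) : ℂ) - (ω : ℂ)‖ ^ γ := e1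
          _ ≤ ‖s‖ ^ (β - α * γ) * W ^ γ := by
              apply mul_le_mul_of_nonneg_left _ (Real.rpow_nonneg (norm_nonneg s) _)
              exact Real.rpow_le_rpow (norm_nonneg _) e2 hγ.le
          _ < δ₂ ^ (β - α * γ) * W ^ γ := by
              apply mul_lt_mul_of_pos_right e3 hWγ
          _ = m := by rw [e4]; field_simp
    have h6 : ‖lam₀‖ - ‖Fc α β γ ω s‖ ≤
        ‖Fc α β γ ω s - lam₀‖ := by
      have h7 := norm_sub_norm_le lam₀ (Fc α β γ ω s)
      rw [norm_sub_rev] at h7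
      simpa using h7
    rw [hm_def] at habsFc ⊢
    linarith


lemma order_eq_one_of_deriv_ne {g : ℂ → ℂ} {s : ℂ} (hg : AnalyticAt ℂ g s) (h0 : g s = 0)
    (h1 : deriv g s ≠ 0) : analyticOrderAt g s = 1 := by
  have htop : analyticOrderAt g s ≠ ⊤ := by
    intro h
    rw [analyticOrderAt_eq_top] at h
    have heq : g =ᶠ[𝓝 s] (fun _ => (0 : ℂ)) := h
    rw [heq.deriv_eq] at h1
    simp at h1
  lift analyticOrderAt g s to ℕ using htop with n hn
  obtain ⟨h, hh, hh0, hfac⟩ := (hg.analyticOrderAt_eq_natCast (n := n)).1 hn.symm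
  simp only [smul_eq_mul] at hfac
  match n with
  | 0 =>
    exfalso
    have := hfac.self_of_nhds
    simp [h0] at this
    exact hh0 this.symm
  | 1 => rfl
  | (n + 2) =>
    exfalso
    apply h1
    have heq : g =ᶠ[𝓝 s] (fun z => (z - s) ^ (n + 2) * h z) := hfac
    rw [heq.deriv_eq]
    have hpow : HasDerivAt (fun z : ℂ => (z - s) ^ (n + 2))
        ((n + 2 : ℕ) * (s - s) ^ (n + 1) * 1) s := by
      exact (((hasDerivAt_id s).sub_const s).pow (n+2)).congr_deriv (by norm_num)
    have hder : HasDerivAt (fun z => (z - s) ^ (n + 2) * h z)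
        (((n + 2 : ℕ) * (s - s) ^ (n + 1) * 1) * h s + (s - s) ^ (n + 2) * deriv h s) s :=
      hpow.mul (hh.differentiableAt.hasDerivAt)
    rw [hder.deriv]
    simp



section
variable {α β γ ω : ℝ} (hω : ω < 0) (hα0 : 0 < α) (hα1 : α ≤ 1) (hαγ : 0 < α * γ)
  (hβ0 : α * γ ≤ β) (hβ1 : β ≤ 1)

include hω hα0 hα1 hαγ hβ0 in
lemma multAt_one {lam s : ℂ} (hs : 0 < s.re) (hroot : Fc α β γ ω s = lam) :
    multAt α β γ ω lam s = 1 := by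
  have hs0 : s ≠ 0 := fun h => by simp [h] at hs
  have hA : AnalyticAt ℂ (fun z => Fc α β γ ω z - lam) s :=
    (analyticAt_Fc hω hα0 hα1 hs.le hs0).sub analyticAt_const
  rw [multAt, dif_pos hA]
  apply order_eq_one_of_deriv_ne hA (by simp [hroot])
  have hd : HasDerivAt (fun z => Fc α β γ ω z - lam) (Dval α β γ ω s) s :=
    (hasDerivAt_Fc hω hα0 hα1 hs.le hs0).sub_const lam
  rw [hd.deriv]
  exact Dval_ne hω hα0 hα1 hαγ hβ0 hs

include hω hα0 hα1 hαγ hβ0 in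
lemma eventually_ne_root {lam s : ℂ} (hs : 0 < s.re) :
    ∀ᶠ z in nhdsWithin s {s}ᶜ, Fc α β γ ω z ≠ lam := by
  have hs0 : s ≠ 0 := fun h => by simp [h] at hs
  have hA : AnalyticAt ℂ (fun z => Fc α β γ ω z - lam) s :=
    (analyticAt_Fc hω hα0 hα1 hs.le hs0).sub analyticAt_const
  rcases hA.eventually_eq_zero_or_eventually_ne_zero with h | h
  · exfalso
    have heq : (fun z => Fc α β γ ω z - lam) =ᶠ[nhds s] (fun _ => (0 : ℂ)) := h
    have hd : HasDerivAt (fun z => Fc α β γ ω z - lam) (Dval α β γ ω s) s :=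
      (hasDerivAt_Fc hω hα0 hα1 hs.le hs0).sub_const lam
    have : Dval α β γ ω s = 0 := by
      rw [← hd.deriv, heq.deriv_eq]
      simp
    exact Dval_ne hω hα0 hα1 hαγ hβ0 hs this
  · filter_upwards [h] with z hz
    exact fun hzz => hz (by rw [hzz, sub_self])

include hω hα0 hα1 hαγ hβ0 in
lemma roots_bounds {lam₀ : ℂ} (hlam₀ : lam₀ ≠ 0)
    (hcl : lam₀ ∉ closure (PsiSet α β γ ω ∪ PsiBar α β γ ω))
    {δ m₀ R : ℝ} (hδ : 0 < δ) (hm₀ : 0 < m₀)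
    (hsmall : ∀ s : ℂ, s ≠ 0 → ‖s‖ < δ → m₀ ≤ ‖Fc α β γ ω s - lam₀‖)
    (hR1 : 1 ≤ R)
    (hRp : ∀ s : ℂ, 0 ≤ s.re → R < ‖s‖ →
      ‖lam₀‖ + 1 < ‖Fc α β γ ω s‖)
    {lam : ℂ} (hlam : lam ≠ 0) (hlamcl : lam ∉ closure (PsiSet α β γ ω ∪ PsiBar α β γ ω))
    (hclose : ‖lam - lam₀‖ < m₀ ∧ ‖lam‖ ≤ ‖lam₀‖ + 1)
    {s : ℂ} (hsre : 0 ≤ s.re) (hroot : Fc α β γ ω s = lam) :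
    0 < s.re ∧ δ ≤ ‖s‖ ∧ ‖s‖ ≤ R := by
  have hs0 : s ≠ 0 := by
    intro h
    rw [h] at hroot
    exact Fc_zero_ne hω hα0 hα1 hαγ hlam hlamcl hroot
  have hsre' : 0 < s.re := by
    rcases lt_or_eq_of_le hsre with h | h
    · exact h
    · exact absurd hroot (boundary_ne hω hα0 hα1 hαγ hβ0 hlamcl h.symm hs0)
  refine ⟨hsre', ?_, ?_⟩
  · by_contra h
    push_neg at h
    have := hsmall s hs0 h
    rw [hroot] at this
    linarith [hclose.1]
  · by_contra h
    push_neg at h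
    have := hRp s hsre h
    rw [hroot] at this
    linarith [hclose.2]

include hω hα0 hα1 hαγ hβ0 in
lemma finite_roots {lam₀ : ℂ} (hlam₀ : lam₀ ≠ 0)
    (hcl : lam₀ ∉ closure (PsiSet α β γ ω ∪ PsiBar α β γ ω)) :
    {s : ℂ | 0 ≤ s.re ∧ Fc α β γ ω s = lam₀}.Finite := by
  obtain ⟨δ, hδ, m₀, hm₀, hsmall⟩ := exists_delta hω hα0 hα1 hαγ hβ0 hlam₀ hcl
  obtain ⟨R, hR1, hRp⟩ := exists_R hω hα0 hα1 hαγ hβ0 lam₀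
  set T : Set ℂ := {s : ℂ | 0 ≤ s.re ∧ Fc α β γ ω s = lam₀} with hT_def
  have hbounds : ∀ s ∈ T, 0 < s.re ∧ δ ≤ ‖s‖ ∧ ‖s‖ ≤ R := by
    intro s hsT
    exact roots_bounds hω hα0 hα1 hαγ hβ0 hlam₀ hcl hδ hm₀ hsmall hR1 hRp hlam₀ hcl
      ⟨by simpa using hm₀, by linarith⟩ hsT.1 hsT.2
  set C : Set ℂ := {s : ℂ | 0 ≤ s.re ∧ δ ≤ ‖s‖ ∧ ‖s‖ ≤ R} with hC_def
  have hCclosed : IsClosed C := by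
    apply IsClosed.inter (isClosed_le continuous_const Complex.continuous_re)
    exact IsClosed.inter (isClosed_le continuous_const continuous_norm)
      (isClosed_le continuous_norm continuous_const)
  have hCcomp : IsCompact C := by
    apply Metric.isCompact_of_isClosed_isBounded hCclosed
    apply Bornology.IsBounded.subset (Metric.isBounded_closedBall (x := (0:ℂ)) (r := R))
    intro s hs
    rw [Metric.mem_closedBall, Complex.dist_eq, sub_zero]
    exact hs.2.2
  have hTsubC : T ⊆ C := fun s hs => ⟨hs.1, (hbounds s hs).2⟩
  have hTeq : T = C ∩ Fc α β γ ω ⁻¹' {lam₀} := by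
    apply Set.Subset.antisymm
    · intro s hs; exact ⟨hTsubC hs, hs.2⟩
    · intro s hs; exact ⟨hs.1.1, hs.2⟩
  have hContC : ContinuousOn (Fc α β γ ω) C := by
    intro s hs
    have hs0 : s ≠ 0 := by
      intro h; rw [h] at hs; simp only [hC_def, Set.mem_setOf_eq] at hs
      rw [norm_zero] at hs; linarith [hs.2.1]
    exact ((analyticAt_Fc hω hα0 hα1 hs.1 hs0).continuousAt).continuousWithinAt
  have hTclosed : IsClosed T := by
    rw [hTeq]
    exact hContC.preimage_isClosed_of_isClosed hCclosed isClosed_singleton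
  have hTcomp : IsCompact T := hCcomp.of_isClosed_subset hTclosed hTsubC
  apply hTcomp.finite
  rw [isDiscrete_iff_discreteTopology, discreteTopology_subtype_iff]
  intro x hx
  have hxre : 0 < x.re := (hbounds x hx).1
  have hev := eventually_ne_root hω hα0 hα1 hαγ hβ0 (lam := lam₀) hxre
  rw [← Filter.empty_mem_iff_bot]
  have := Filter.inter_mem_inf hev (Filter.mem_principal_self T)
  apply Filter.mem_of_superset this
  rintro z ⟨hz1, hz2⟩
  exact absurd hz2.2 hz1

end

lemma local_data {α β γ ω : ℝ} (hω : ω < 0) (hα0 : 0 < α) (hα1 : α ≤ 1) (hαγ : 0 < α * γ)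
    (hβ0 : α * γ ≤ β) {lam₀ t : ℂ} (htre : 0 < t.re) (hroot : Fc α β γ ω t = lam₀)
    (sep : ℝ) (hsep : 0 < sep) :
    ∃ (ρ ε : ℝ) (Φ : OpenPartialHomeomorph ℂ ℂ), 0 < ρ ∧ 0 < ε ∧ ρ ≤ sep ∧
      Metric.ball t ρ ⊆ Φ.source ∧ (∀ z ∈ Metric.ball t ρ, 0 < z.re) ∧
      (⇑Φ = Fc α β γ ω) ∧ Metric.ball lam₀ ε ⊆ Φ.target ∧
      (∀ lam' : ℂ, dist lam' lam₀ < ε → Φ.symm lam' ∈ Metric.ball t ρ) := by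
  have hs0 : t ≠ 0 := fun h => by simp [h] at htre
  have hA := analyticAt_Fc (β := β) (γ := γ) hω hα0 hα1 htre.le hs0
  have hD := hasDerivAt_Fc (β := β) (γ := γ) hω hα0 hα1 htre.le hs0
  have hne : deriv (Fc α β γ ω) t ≠ 0 := by
    rw [hD.deriv]
    exact Dval_ne hω hα0 hα1 hαγ hβ0 htre
  have hstrict : HasStrictDerivAt (Fc α β γ ω) (deriv (Fc α β γ ω) t) t :=
    (hA.contDiffAt : ContDiffAt ℂ 1 (Fc α β γ ω) t).hasStrictDerivAt one_ne_zero
  set hF := hstrict.hasStrictFDerivAt_equiv hne with hF_def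
  set Φ : OpenPartialHomeomorph ℂ ℂ := HasStrictFDerivAt.toOpenPartialHomeomorph (Fc α β γ ω) hF with hΦ_def
  have hcoe : ⇑Φ = Fc α β γ ω := HasStrictFDerivAt.toOpenPartialHomeomorph_coe hF
  have htsrc : t ∈ Φ.source := HasStrictFDerivAt.mem_toOpenPartialHomeomorph_source hF
  have hltar : lam₀ ∈ Φ.target := by
    have h := HasStrictFDerivAt.image_mem_toOpenPartialHomeomorph_target hF
    rwa [hroot] at h
  have hopen : IsOpen (Φ.source ∩ {z : ℂ | 0 < z.re}) :=
    Φ.open_source.inter (isOpen_lt continuous_const Complex.continuous_re)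
  obtain ⟨ρ₀, hρ₀, hball₀⟩ := Metric.isOpen_iff.1 hopen t ⟨htsrc, htre⟩
  set ρ : ℝ := min ρ₀ sep with hρ_def
  have hρ : 0 < ρ := lt_min hρ₀ hsep
  have hsymmt : Φ.symm lam₀ = t := by
    have h1 : Φ t = lam₀ := by rw [hcoe]; exact hroot
    rw [← h1]
    exact Φ.left_inv htsrc
  have hsymmcont : ContinuousAt Φ.symm lam₀ :=
    Φ.symm.continuousAt (by rwa [OpenPartialHomeomorph.symm_source])
  obtain ⟨ε₁, hε₁, hε₁p⟩ := Metric.continuousAt_iff.1 hsymmcont ρ hρ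
  obtain ⟨ε₂, hε₂, hball₂⟩ := Metric.isOpen_iff.1 Φ.open_target lam₀ hltar
  refine ⟨ρ, min ε₁ ε₂, Φ, hρ, lt_min hε₁ hε₂, min_le_right _ _, ?_, ?_, hcoe, ?_, ?_⟩
  · intro z hz
    exact (hball₀ (Metric.ball_subset_ball (min_le_left _ _) hz)).1
  · intro z hz
    exact (hball₀ (Metric.ball_subset_ball (min_le_left _ _) hz)).2
  · exact fun lam' h => hball₂ (Metric.mem_ball.2 (lt_of_lt_of_le h (min_le_right _ _)))
  · intro lam' h
    have := hε₁p (show dist lam' lam₀ < ε₁ from lt_of_lt_of_le h (min_le_left _ _))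
    rw [hsymmt] at this
    exact this

theorem unstable_root_count_locally_constant (α β γ ω : ℝ) (hω : ω < 0) (hα0 : 0 < α)
    (hα1 : α ≤ 1) (hαγ : 0 < α * γ) (hβ0 : α * γ ≤ β) (hβ1 : β ≤ 1)
    (lam₀ : ℂ) (hlam₀ : lam₀ ≠ 0)
    (hcl : lam₀ ∉ closure (PsiSet α β γ ω ∪ PsiBar α β γ ω)) :
    ∃ r > 0, ∀ lam : ℂ, ‖lam - lam₀‖ < r →
      Ncount α β γ ω lam = Ncount α β γ ω lam₀ := by
  obtain ⟨δ, hδ, m₀, hm₀, hsmall⟩ := exists_delta hω hα0 hα1 hαγ hβ0 hlam₀ hcl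
  obtain ⟨R, hR1, hRp⟩ := exists_R hω hα0 hα1 hαγ hβ0 lam₀
  obtain ⟨rc, hrc, hrcball⟩ := Metric.isOpen_iff.1 (isClosed_closure.isOpen_compl) lam₀ hcl
  set T : Set ℂ := {s : ℂ | 0 ≤ s.re ∧ Fc α β γ ω s = lam₀} with hT_def
  have hTfin : T.Finite := finite_roots hω hα0 hα1 hαγ hβ0 hlam₀ hcl
  have habslam₀ : 0 < ‖lam₀‖ := norm_pos_iff.mpr hlam₀
  have hTprop : ∀ t ∈ T, 0 < t.re ∧ δ ≤ ‖t‖ ∧ ‖t‖ ≤ R := fun t ht =>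
    roots_bounds hω hα0 hα1 hαγ hβ0 hlam₀ hcl hδ hm₀ hsmall hR1 hRp hlam₀ hcl
      ⟨by simpa using hm₀, by linarith⟩ ht.1 ht.2
  have hsepex : ∀ t, t ∈ T → ∃ d, 0 < d ∧ ∀ t' ∈ T, t' ≠ t → 2 * d ≤ dist t t' := by
    intro t ht
    by_cases hne : (hTfin.toFinset.erase t).Nonempty
    · set d := (hTfin.toFinset.erase t).inf' hne (fun t' => dist t t') with hd_def
      have hdpos : 0 < d := by
        rw [hd_def, Finset.lt_inf'_iff]
        intro t' ht'
        exact dist_pos.2 (fun h => (Finset.ne_of_mem_erase ht') h.symm)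
      refine ⟨d / 2, by linarith, fun t' ht' hne' => ?_⟩
      have ht'F : t' ∈ hTfin.toFinset.erase t :=
        Finset.mem_erase.2 ⟨hne', hTfin.mem_toFinset.2 ht'⟩
      have := Finset.inf'_le (fun t' => dist t t') ht'F
      rw [← hd_def] at this
      linarith
    · exact ⟨1, one_pos, fun t' ht' hne' =>
        absurd ⟨t', Finset.mem_erase.2 ⟨hne', hTfin.mem_toFinset.2 ht'⟩⟩ hne⟩
  have key : ∀ t, t ∈ T → ∃ (ρ ε : ℝ) (Φ : OpenPartialHomeomorph ℂ ℂ), 0 < ρ ∧ 0 < ε ∧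
      (∀ t' ∈ T, t' ≠ t → 2 * ρ ≤ dist t t') ∧
      Metric.ball t ρ ⊆ Φ.source ∧ (∀ z ∈ Metric.ball t ρ, 0 < z.re) ∧
      (⇑Φ = Fc α β γ ω) ∧ Metric.ball lam₀ ε ⊆ Φ.target ∧
      (∀ lam' : ℂ, dist lam' lam₀ < ε → Φ.symm lam' ∈ Metric.ball t ρ) := by
    intro t ht
    obtain ⟨d, hd, hdprop⟩ := hsepex t ht
    obtain ⟨ρ, ε, Φ, hρ, hε, hρd, h1, h2, h3, h4, h5⟩ :=
      local_data hω hα0 hα1 hαγ hβ0 (hTprop t ht).1 ht.2 d hd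
    exact ⟨ρ, ε, Φ, hρ, hε,
      fun t' ht' h => le_trans (by linarith) (hdprop t' ht' h), h1, h2, h3, h4, h5⟩
  choose ρf εf Φf hρf hεf hsepf hsrcf href hcoef htarf hsymmf using key
  set U : Set ℂ := ⋃ (t : ℂ) (h : t ∈ T), Metric.ball t (ρf t h) with hU_def
  have hUopen : IsOpen U := isOpen_iUnion fun t => isOpen_iUnion fun h => Metric.isOpen_ball
  set C : Set ℂ := {s : ℂ | 0 ≤ s.re ∧ δ ≤ ‖s‖ ∧ ‖s‖ ≤ R} with hC_def
  have hCclosed : IsClosed C := by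
    apply IsClosed.inter (isClosed_le continuous_const Complex.continuous_re)
    exact IsClosed.inter (isClosed_le continuous_const continuous_norm)
      (isClosed_le continuous_norm continuous_const)
  have hCcomp : IsCompact C := by
    apply Metric.isCompact_of_isClosed_isBounded hCclosed
    apply Bornology.IsBounded.subset (Metric.isBounded_closedBall (x := (0:ℂ)) (r := R))
    intro s hs
    rw [Metric.mem_closedBall, Complex.dist_eq, sub_zero]
    exact hs.2.2
  have hContC : ContinuousOn (Fc α β γ ω) C := by
    intro s hs
    have hs0 : s ≠ 0 := by
      intro h; rw [h] at hs; simp only [hC_def, Set.mem_setOf_eq] at hs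
      rw [norm_zero] at hs; linarith [hs.2.1]
    exact ((analyticAt_Fc hω hα0 hα1 hs.1 hs0).continuousAt).continuousWithinAt
  set K : Set ℂ := C \ U with hK_def
  have hKcomp : IsCompact K := hCcomp.diff hUopen
  obtain ⟨mK, hmK, hKb⟩ : ∃ mK, 0 < mK ∧ ∀ s ∈ K, mK ≤ ‖Fc α β γ ω s - lam₀‖ := by
    by_cases hKne : K.Nonempty
    · have hcont : ContinuousOn (fun s => ‖Fc α β γ ω s - lam₀‖) K :=
        continuous_norm.comp_continuousOn
          ((hContC.mono Set.diff_subset).sub continuousOn_const)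
      obtain ⟨x, hxK, hxmin⟩ := hKcomp.exists_isMinOn hKne hcont
      refine ⟨_, ?_, fun s hs => hxmin hs⟩
      rw [norm_pos_iff, sub_ne_zero]
      intro heq
      have hxT : x ∈ T := ⟨hxK.1.1, heq⟩
      exact hxK.2 (Set.mem_iUnion₂.2 ⟨x, hxT, Metric.mem_ball_self (hρf x hxT)⟩)
    · exact ⟨1, one_pos, fun s hs => absurd ⟨s, hs⟩ hKne⟩
  set rε : ℝ := if h : hTfin.toFinset.Nonempty then
      hTfin.toFinset.inf' h (fun t => if ht : t ∈ T then εf t ht else 1) else 1 with hrε_def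
  have hrε : 0 < rε := by
    rw [hrε_def]
    split_ifs with h
    · rw [Finset.lt_inf'_iff]
      intro t htF
      have ht : t ∈ T := hTfin.mem_toFinset.1 htF
      rw [dif_pos ht]
      exact hεf t ht
    · exact one_pos
  have hrεle : ∀ t (ht : t ∈ T), rε ≤ εf t ht := by
    intro t ht
    have htF : t ∈ hTfin.toFinset := hTfin.mem_toFinset.2 ht
    rw [hrε_def, dif_pos ⟨t, htF⟩]
    have := Finset.inf'_le (fun t => if ht : t ∈ T then εf t ht else 1) htF
    rwa [dif_pos ht] at this
  set r : ℝ := min (min m₀ 1) (min (‖lam₀‖) (min rc (min mK rε))) with hr_def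
  have hrpos : 0 < r :=
    lt_min (lt_min hm₀ one_pos) (lt_min habslam₀ (lt_min hrc (lt_min hmK hrε)))
  have main : ∀ lam : ℂ, ‖lam - lam₀‖ < r →
      Ncount α β γ ω lam = ∑' _t : {t : ℂ // t ∈ T}, (1 : ℕ∞) := by
    intro lam hlamr
    have hrm₀ : ‖lam - lam₀‖ < m₀ :=
      lt_of_lt_of_le hlamr (le_trans (min_le_left _ _) (min_le_left _ _))
    have hr1 : ‖lam - lam₀‖ < 1 :=
      lt_of_lt_of_le hlamr (le_trans (min_le_left _ _) (min_le_right _ _))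
    have hrabs : ‖lam - lam₀‖ < ‖lam₀‖ :=
      lt_of_lt_of_le hlamr (le_trans (min_le_right _ _) (min_le_left _ _))
    have hrrc : ‖lam - lam₀‖ < rc :=
      lt_of_lt_of_le hlamr (le_trans (min_le_right _ _)
        (le_trans (min_le_right _ _) (min_le_left _ _)))
    have hrmK : ‖lam - lam₀‖ < mK :=
      lt_of_lt_of_le hlamr (le_trans (min_le_right _ _) (le_trans (min_le_right _ _)
        (le_trans (min_le_right _ _) (min_le_left _ _))))
    have hrrε : ‖lam - lam₀‖ < rε :=
      lt_of_lt_of_le hlamr (le_trans (min_le_right _ _) (le_trans (min_le_right _ _)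
        (le_trans (min_le_right _ _) (min_le_right _ _))))
    have hlamne : lam ≠ 0 := by
      intro h
      rw [h] at hrabs
      simp only [zero_sub, norm_neg] at hrabs
      exact lt_irrefl _ hrabs
    have hlamcl : lam ∉ closure (PsiSet α β γ ω ∪ PsiBar α β γ ω) := by
      have hmem : lam ∈ Metric.ball lam₀ rc := by
        rw [Metric.mem_ball, Complex.dist_eq]; exact hrrc
      exact fun hc2 => (hrcball hmem) hc2
    have habslam : ‖lam‖ ≤ ‖lam₀‖ + 1 := by
      have h7 := norm_sub_norm_le lam lam₀
      linarith
    have hboundslam : ∀ s : ℂ, 0 ≤ s.re → Fc α β γ ω s = lam →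
        0 < s.re ∧ δ ≤ ‖s‖ ∧ ‖s‖ ≤ R := fun s h1 h2 =>
      roots_bounds hω hα0 hα1 hαγ hβ0 hlam₀ hcl hδ hm₀ hsmall hR1 hRp hlamne hlamcl
        ⟨hrm₀, habslam⟩ h1 h2
    have hcover : ∀ s : ℂ, 0 ≤ s.re → Fc α β γ ω s = lam →
        ∃ t, ∃ ht : t ∈ T, s ∈ Metric.ball t (ρf t ht) := by
      intro s h1 h2
      obtain ⟨hsre, hsδ, hsR⟩ := hboundslam s h1 h2
      by_contra hnot
      push_neg at hnot
      have hsK : s ∈ K := by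
        refine ⟨⟨h1, hsδ, hsR⟩, ?_⟩
        intro hsU
        obtain ⟨t, ht, hball⟩ := Set.mem_iUnion₂.1 hsU
        exact hnot t ht hball
      have := hKb s hsK
      rw [h2] at this
      linarith
    have hlamtar : ∀ t (ht : t ∈ T), dist lam lam₀ < εf t ht := by
      intro t ht
      rw [Complex.dist_eq]
      exact lt_of_lt_of_le hrrε (hrεle t ht)
    have hroott : ∀ t (ht : t ∈ T), Fc α β γ ω ((Φf t ht).symm lam) = lam ∧
        (Φf t ht).symm lam ∈ Metric.ball t (ρf t ht) := by
      intro t ht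
      refine ⟨?_, hsymmf t ht lam (hlamtar t ht)⟩
      have hmemtar : lam ∈ (Φf t ht).target :=
        htarf t ht (Metric.mem_ball.2 (hlamtar t ht))
      have h8 := (Φf t ht).right_inv hmemtar
      rw [← hcoef t ht]
      exact h8
    have huniq : ∀ t (ht : t ∈ T) (s : ℂ), s ∈ Metric.ball t (ρf t ht) →
        Fc α β γ ω s = lam → s = (Φf t ht).symm lam := by
      intro t ht s hball hs
      exact (Φf t ht).injOn (hsrcf t ht hball) (hsrcf t ht (hroott t ht).2)
        (by simp only [hcoef t ht]; rw [hs, (hroott t ht).1])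
    set g : {t : ℂ // t ∈ T} → {s : ℂ // 0 ≤ s.re ∧ Fc α β γ ω s = lam} := fun tp =>
      ⟨(Φf tp.1 tp.2).symm lam,
        le_of_lt (href tp.1 tp.2 _ (hroott tp.1 tp.2).2), (hroott tp.1 tp.2).1⟩ with hg_def
    have hg_bij : Function.Bijective g := by
      constructor
      · rintro ⟨t, ht⟩ ⟨t', ht'⟩ heq
        by_contra hnee
        have hne' : t ≠ t' := fun h => hnee (Subtype.ext h)
        have hz := (hroott t ht).2
        have hz' := (hroott t' ht').2
        have hzz : (Φf t ht).symm lam = (Φf t' ht').symm lam := congrArg Subtype.val heq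
        rw [hzz] at hz
        have d1 := hsepf t ht t' ht' (Ne.symm hne')
        have e1 : dist ((Φf t' ht').symm lam) t < ρf t ht := Metric.mem_ball.1 hz
        have e2 : dist ((Φf t' ht').symm lam) t' < ρf t' ht' := Metric.mem_ball.1 hz'
        have d2 := hsepf t' ht' t ht hne'
        have htri := dist_triangle t ((Φf t' ht').symm lam) t'
        have hcomm : dist t ((Φf t' ht').symm lam) = dist ((Φf t' ht').symm lam) t :=
          dist_comm _ _
        have hcomm2 : dist t' t = dist t t' := dist_comm _ _
        rw [hcomm2] at d2
        linarith
      · rintro ⟨s, hs1, hs2⟩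
        obtain ⟨t, ht, hball⟩ := hcover s hs1 hs2
        exact ⟨⟨t, ht⟩, Subtype.ext ((huniq t ht s hball hs2).symm)⟩
    calc Ncount α β γ ω lam
        = ∑' s : {s : ℂ // 0 ≤ s.re ∧ Fc α β γ ω s = lam}, multAt α β γ ω lam (s : ℂ) := rfl
      _ = ∑' _s : {s : ℂ // 0 ≤ s.re ∧ Fc α β γ ω s = lam}, (1 : ℕ∞) := by
          apply tsum_congr
          intro s
          exact multAt_one hω hα0 hα1 hαγ hβ0 (hboundslam s s.2.1 s.2.2).1 s.2.2
      _ = ∑' _t : {t : ℂ // t ∈ T}, (1 : ℕ∞) :=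
          (Equiv.tsum_eq (Equiv.ofBijective g hg_bij) (fun _ => (1 : ℕ∞))).symm
  refine ⟨r, hrpos, fun lam hlam => ?_⟩
  rw [main lam hlam, main lam₀ (by simpa using hrpos)]
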